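/- Lemma 2 (the last step of a minimal trace is in tr(B)): Let (Σ,S,T) be an automata network, s a global state with s(a) = a_0 for every a ∈ Σ, and g_⊤ ∈ S(g) a goal local state with g_0 ≠ g_⊤. If π is a trace from s that is minimal w.r.t. g_⊤ reachability, then π^{|π|} ⊆ tr(B). -/

import Mathlib

/-!
Automata networks (ANs), steps, traces, minimal traces, local causality analysis
and the goal-oriented reduction, following Paulevé, "Goal-Oriented Reduction of
Automata Networks".
-/

universe u v

/-- An automata network: a finite set of automata identifiers, each with a
finite set of local states.  (The transition relation is given separately,
as a `TransMap`.) -/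
structure AN : Type (max (u + 1) (v + 1)) where
  /-- automata identifiers -/
  Auto : Type u
  /-- local states of each automaton -/
  LS : Auto → Type v
  [decAuto : DecidableEq Auto]
  [fintypeAuto : Fintype Auto]
  [decLS : ∀ a, DecidableEq (LS a)]
  [fintypeLS : ∀ a, Fintype (LS a)]

attribute [instance] AN.decAuto AN.fintypeAuto AN.decLS AN.fintypeLS

namespace AN

variable (N : AN)

/-- The type of all local states, each recording its automaton. -/
abbrev LSt := Σ a : N.Auto, N.LS a

/-- Global states: one local state per automaton. -/
abbrev GState := ∀ a : N.Auto, N.LS a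

/-- A local transition of automaton `a`: an origin and a destination local
state of `a` (distinct), together with an enabling condition giving at most
one local state per automaton, and none for `a` itself. -/
structure Trans (a : N.Auto) where
  orig : N.LS a
  dest : N.LS a
  orig_ne_dest : orig ≠ dest
  enab : ∀ b : N.Auto, Option (N.LS b)
  enab_self : enab a = none

/-- The transition relation `T`: a set of local transitions per automaton. -/
abbrev TransMap := ∀ a : N.Auto, Set (N.Trans a)

variable {N}

/-- Pre-condition `•t` of a local transition. -/
def Trans.preSet {a : N.Auto} (t : N.Trans a) : Set N.LSt :=
  insert ⟨a, t.orig⟩ {p | t.enab p.1 = some p.2}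

/-- Post-condition `t•` of a local transition. -/
def Trans.postSet {a : N.Auto} (t : N.Trans a) : Set N.LSt :=
  insert ⟨a, t.dest⟩ {p | t.enab p.1 = some p.2}

variable (N)

/-- A step: a set of local transitions with at most one transition per
automaton. -/
abbrev Step := ∀ a : N.Auto, Option (N.Trans a)

variable {N}

/-- Pre-condition `•τ` of a step. -/
def Step.pre (τ : Step N) : Set N.LSt :=
  ⋃ (b : N.Auto), ⋃ (t : N.Trans b), ⋃ (_ : τ b = some t), t.preSet

/-- Post-condition `τ•` of a step. -/
def Step.post (τ : Step N) : Set N.LSt :=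
  (⋃ (b : N.Auto), ⋃ (t : N.Trans b), ⋃ (_ : τ b = some t), t.postSet) \
    {p | ∃ t : N.Trans p.1, τ p.1 = some t ∧ p.2 = t.orig}

/-- `σ` is a sub-step of `τ` (inclusion of sets of transitions). -/
def Step.Sub (σ τ : Step N) : Prop :=
  ∀ ⦃a : N.Auto⦄ ⦃t : N.Trans a⦄, σ a = some t → τ a = some t

/-- The step only uses transitions of `T`. -/
def Step.Wf (T : TransMap N) (τ : Step N) : Prop :=
  ∀ ⦃a : N.Auto⦄ ⦃t : N.Trans a⦄, τ a = some t → t ∈ T a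

/-- A step `τ` is playable in `s` iff `•τ ⊆ s`. -/
def Playable (s : GState N) (τ : Step N) : Prop :=
  ∀ p ∈ τ.pre, s p.1 = p.2

/-- `s·τ`: the global state after applying step `τ` in `s`. -/
def applyStep (s : GState N) (τ : Step N) : GState N :=
  fun a => (τ a).elim (s a) Trans.dest

/-- The global state after applying a sequence of steps. -/
def applyTrace (s : GState N) (π : List (Step N)) : GState N :=
  π.foldl applyStep s

/-- `π` is a trace from `s` (of the network with transitions `T`): a finite
sequence of successively playable steps. -/
def IsTrace (T : TransMap N) (s : GState N) (π : List (Step N)) : Prop :=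
  ∀ i (h : i < π.length),
    (π.get ⟨i, h⟩).Wf T ∧ Playable (applyTrace s (π.take i)) (π.get ⟨i, h⟩)

/-- Post-condition `post(π)` of a trace: `⟨a, x⟩ ∈ post(π)` iff `⟨a, x⟩` is in
the post-condition of some step and no later step has a local state of
automaton `a` in its post-condition. -/
def tracePost (π : List (Step N)) : Set N.LSt :=
  {p | ∃ n, ∃ hn : n < π.length, p ∈ (π.get ⟨n, hn⟩).post ∧
    ∀ m (hm : m < π.length), n < m →
      ∀ x : N.LS p.1, (⟨p.1, x⟩ : N.LSt) ∉ (π.get ⟨m, hm⟩).post}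

/-- Local states of automaton `a` in the post-condition of a trace. -/
def postProj (π : List (Step N)) (a : N.Auto) : Set (N.LS a) :=
  {x | (⟨a, x⟩ : N.LSt) ∈ tracePost π}

/-- `tr(π)`: the set of transitions composing a trace. -/
def traceTrans (π : List (Step N)) : Set (Σ a : N.Auto, N.Trans a) :=
  {q | ∃ τ ∈ π, τ q.1 = some q.2}

/-- `ϖ` is a sub-trace of `π`: there is a strictly order-preserving injection
`φ` of the steps of `ϖ` into those of `π` with `ϖ^i ⊆ π^{φ(i)}`. -/
def SubTrace (ϖ π : List (Step N)) : Prop :=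
  ∃ φ : Fin ϖ.length → Fin π.length, StrictMono φ ∧
    ∀ i : Fin ϖ.length, (ϖ.get i).Sub (π.get (φ i))

/-- `π` is a minimal trace from `s` w.r.t. the reachability of the local state
`p`. -/
def MinimalTrace (T : TransMap N) (s : GState N) (p : N.LSt)
    (π : List (Step N)) : Prop :=
  IsTrace T s π ∧ p ∈ tracePost π ∧
    ¬ ∃ ϖ : List (Step N), IsTrace T s ϖ ∧ ϖ ≠ π ∧ ϖ.length ≤ π.length ∧
      p ∈ tracePost ϖ ∧ SubTrace ϖ π

/-- The local state `p` is reachable from `s`. -/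
def Reachable (T : TransMap N) (s : GState N) (p : N.LSt) : Prop :=
  s p.1 = p.2 ∨ ∃ π : List (Step N), IsTrace T s π ∧ p ∈ tracePost π

/-- `η ∈ local-paths(a_i ↝ a_j)`: local acyclic paths of automaton `a` from
`i` to `j`, using transitions of `T`. -/
def IsLocalPath (T : TransMap N) {a : N.Auto} (i j : N.LS a)
    (η : List (N.Trans a)) : Prop :=
  (∀ t ∈ η, t ∈ T a) ∧
    ((i = j ∧ η = []) ∨
     (i ≠ j ∧ ∃ hne : η ≠ [],
       (η.head hne).orig = i ∧ (η.getLast hne).dest = j ∧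
       (∀ n : ℕ, ∀ h : n + 1 < η.length,
         (η.get ⟨n, Nat.lt_of_succ_lt h⟩).dest = (η.get ⟨n + 1, h⟩).orig) ∧
       (∀ n m : Fin η.length, m < n → (η.get n).dest ≠ (η.get m).orig)))

variable (N)

/-- Objectives `a_i ↝ a_j`: pairs of local states of a same automaton. -/
abbrev Obj := Σ a : N.Auto, N.LS a × N.LS a

variable {N}

/-- The operator `F` on sets of objectives: `a_i ↝ a_j ∈ F(Ω)` iff some local
acyclic path from `i` to `j` has all the objectives from the initial state `s`
to its enabling conditions already in `Ω`. -/
def Fop (T : TransMap N) (s : GState N) (Ω : Set (Obj N)) : Set (Obj N) :=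
  {P | ∃ η : List (N.Trans P.1), IsLocalPath T P.2.1 P.2.2 η ∧
    ∀ t ∈ η, ∀ (b : N.Auto) (k : N.LS b), t.enab b = some k →
      (⟨b, (s b, k)⟩ : Obj N) ∈ Ω}

/-- `rcsol_s(P)` (with validity given by the set `Ω` of valid objectives):
local acyclic paths for `P` whose enabling conditions only involve valid
objectives from the initial state `s`. -/
def rcsol (T : TransMap N) (s : GState N) (Ω : Set (Obj N)) (P : Obj N) :
    Set (List (N.Trans P.1)) :=
  {η | IsLocalPath T P.2.1 P.2.2 η ∧
    ∀ t ∈ η, ∀ (b : N.Auto) (k : N.LS b), t.enab b = some k →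
      (⟨b, (s b, k)⟩ : Obj N) ∈ Ω}

/-- `tr(rcsol_s(P))`: the transitions of the filtered local paths of `P`. -/
def rcsolTr (T : TransMap N) (s : GState N) (Ω : Set (Obj N)) (P : Obj N) :
    Set (N.Trans P.1) :=
  {t | ∃ η ∈ rcsol T s Ω P, t ∈ η}

/-- `tr(B)`: the transitions of the filtered local paths of the objectives
in `B`. -/
def trB (T : TransMap N) (s : GState N) (Ω : Set (Obj N)) (B : Set (Obj N)) :
    Set (Σ a : N.Auto, N.Trans a) :=
  {q | ∃ i j : N.LS q.1, (⟨q.1, (i, j)⟩ : Obj N) ∈ B ∧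
    q.2 ∈ rcsolTr T s Ω (⟨q.1, (i, j)⟩ : Obj N)}

/-- The closure conditions defining the set `B` of collected objectives for
the goal `g_⊤` from the initial state `s` (so that `a_0 = s a` for each
automaton `a`):
(1) `g_0 ↝ g_⊤ ∈ B`;
(2) if `b_j →^ℓ b_k ∈ tr(B)` then `a_0 ↝ a_i ∈ B` for every `a_i ∈ ℓ`;
(3) if `b_j →^ℓ b_k ∈ tr(B)` and `b_⋆ ↝ b_i ∈ B` then `b_k ↝ b_i ∈ B`. -/
def BClosed (T : TransMap N) (s : GState N) (Ω : Set (Obj N))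
    (g : N.Auto) (gtop : N.LS g) (B : Set (Obj N)) : Prop :=
  (⟨g, (s g, gtop)⟩ : Obj N) ∈ B ∧
  (∀ (b : N.Auto) (t : N.Trans b),
      (⟨b, t⟩ : Σ a : N.Auto, N.Trans a) ∈ trB T s Ω B →
    ∀ (a : N.Auto) (i : N.LS a), t.enab a = some i →
      (⟨a, (s a, i)⟩ : Obj N) ∈ B) ∧
  (∀ (b : N.Auto) (t : N.Trans b),
      (⟨b, t⟩ : Σ a : N.Auto, N.Trans a) ∈ trB T s Ω B →
    ∀ bs bi : N.LS b, (⟨b, (bs, bi)⟩ : Obj N) ∈ B →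
      (⟨b, (t.dest, bi)⟩ : Obj N) ∈ B)

end AN

open AN

namespace ANAux

variable {N : AN}

/-! ### Chained sequences of local transitions -/

/-- Chained sequence of local transitions from `i` to `j`. -/
def Chain1 {a : N.Auto} : N.LS a → N.LS a → List (N.Trans a) → Prop
  | i, j, [] => i = j
  | i, j, t :: w => t.orig = i ∧ Chain1 t.dest j w

lemma chain1_append {a : N.Auto} {j : N.LS a} :
    ∀ {w₁ : List (N.Trans a)} {i x : N.LS a} {w₂ : List (N.Trans a)},
      Chain1 i x w₁ → Chain1 x j w₂ → Chain1 i j (w₁ ++ w₂)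
  | [], i, x, w₂, h₁, h₂ => by cases h₁; simpa using h₂
  | t :: w, i, x, w₂, h₁, h₂ => by
      obtain ⟨ho, hc⟩ := h₁
      exact ⟨ho, chain1_append hc h₂⟩

lemma chain1_drop {a : N.Auto} {j : N.LS a} :
    ∀ {w : List (N.Trans a)} {i : N.LS a} (k : ℕ) (h : k < w.length),
      Chain1 i j w → Chain1 (w[k].dest) j (w.drop (k + 1))
  | t :: w, i, 0, h, hc => by simpa using hc.2
  | t :: w, i, k + 1, h, hc => by
      simpa using chain1_drop k (by simpa using h) hc.2

/-- Loop erasure: every chained walk contains a chained subfamily of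
transitions visiting pairwise distinct local states. -/
lemma exists_loopfree {a : N.Auto} {j : N.LS a} :
    ∀ (w : List (N.Trans a)) {i : N.LS a}, Chain1 i j w →
      ∃ η, Chain1 i j η ∧ (i :: η.map Trans.dest).Nodup ∧ ∀ t ∈ η, t ∈ w
  | [], i, h => ⟨[], h, by simp, by simp⟩
  | t :: w, i, h => by
      obtain ⟨ho, hc⟩ := h
      obtain ⟨η', hch, hnd, hsub⟩ := exists_loopfree w hc
      by_cases hi : i ∈ t.dest :: η'.map Trans.dest
      · rcases List.mem_cons.1 hi with hi | hi
        · subst hi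
          exact ⟨η', hch, hnd, fun u hu => List.mem_cons_of_mem _ (hsub u hu)⟩
        · obtain ⟨k, hk, hkd⟩ := List.mem_iff_getElem.1 hi
          rw [List.length_map] at hk
          rw [List.getElem_map] at hkd
          refine ⟨η'.drop (k + 1), ?_, ?_, ?_⟩
          · rw [← hkd]; exact chain1_drop k hk hch
          · have hk' : k < (η'.map Trans.dest).length := by simpa using hk
            have h1 : i :: (η'.drop (k + 1)).map Trans.dest
                = (η'.map Trans.dest).drop k := by
              rw [List.map_drop]
              conv_rhs => rw [List.drop_eq_getElem_cons hk']
              simp [hkd]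
            rw [h1]
            exact ((hnd.of_cons).sublist (List.drop_sublist _ _))
          · intro u hu
            exact List.mem_cons_of_mem _ (hsub u (List.mem_of_mem_drop hu))
      · exact ⟨t :: η', ⟨ho, hch⟩,
          by rw [List.map_cons]; exact List.nodup_cons.mpr ⟨hi, hnd⟩,
          fun u hu => by
            rcases List.mem_cons.1 hu with rfl | hu
            · exact List.mem_cons_self
            · exact List.mem_cons_of_mem _ (hsub u hu)⟩

lemma chain1_orig {a : N.Auto} {j : N.LS a} :
    ∀ {w : List (N.Trans a)} {i : N.LS a}, Chain1 i j w →
      ∀ (k : ℕ) (h : k < w.length),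
        w[k].orig = (i :: w.map Trans.dest)[k]'(by simp; omega)
  | t :: w, i, hc, 0, h => by simpa using hc.1
  | t :: w, i, hc, k + 1, h => by
      simpa using chain1_orig hc.2 k (by simpa using h)

lemma chain1_getLast {a : N.Auto} {j : N.LS a} :
    ∀ {w : List (N.Trans a)} {i : N.LS a}, Chain1 i j w →
      ∀ (h : w ≠ []), (w.getLast h).dest = j
  | [t], i, hc, h => by simpa [Chain1] using hc.2
  | t :: u :: w, i, hc, h => by
      simpa [List.getLast] using chain1_getLast hc.2 (by simp)

/-- A loop-free chained sequence is a local acyclic path. -/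
lemma isLocalPath_of {T : TransMap N} {a : N.Auto} {i j : N.LS a}
    {η : List (N.Trans a)} (hT : ∀ t ∈ η, t ∈ T a) (hc : Chain1 i j η)
    (hnd : (i :: η.map Trans.dest).Nodup) : IsLocalPath T i j η := by
  refine ⟨hT, ?_⟩
  rcases η with _ | ⟨t, η'⟩
  · exact Or.inl ⟨hc, rfl⟩
  · have hne : t :: η' ≠ [] := by simp
    have hlast := chain1_getLast hc hne
    have hij : i ≠ j := by
      intro h
      have hj : j ∈ (t :: η').map Trans.dest := by
        rw [← hlast]; exact List.mem_map_of_mem (List.getLast_mem hne)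
      exact (List.nodup_cons.1 hnd).1 (h ▸ hj)
    have hvst : ∀ (k : ℕ) (h : k < (t :: η').length),
        (t :: η')[k].orig = (i :: (t :: η').map Trans.dest)[k]'(by
          simp only [List.length_cons, List.length_map] at h ⊢; omega) :=
      chain1_orig hc
    refine Or.inr ⟨hij, hne, ?_, hlast, ?_, ?_⟩
    · simpa using hc.1
    · intro n h
      have h1 := hvst (n + 1) h
      simp only [List.get_eq_getElem]
      rw [h1, List.getElem_cons_succ]
      exact (List.getElem_map _).symm
    · intro n m hmn heq
      simp only [List.get_eq_getElem] at heq
      have h1 := hvst m (by omega)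
      rw [h1] at heq
      have h2 : ((t :: η').map Trans.dest)[(n : ℕ)]'(by simpa using n.2)
          = (i :: (t :: η').map Trans.dest)[(n : ℕ) + 1]'(by simpa using n.2) := by
        simp
      rw [List.getElem_map] at h2
      rw [h2] at heq
      have := (hnd.getElem_inj_iff).1 heq
      omega

/-! ### Basic facts about steps and traces -/

variable {T : TransMap N}

lemma applyStep_some {s : GState N} {τ : Step N} {b : N.Auto} {t : N.Trans b}
    (h : τ b = some t) : applyStep s τ b = t.dest := by simp [applyStep, h]

lemma applyStep_none {s : GState N} {τ : Step N} {b : N.Auto}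
    (h : τ b = none) : applyStep s τ b = s b := by simp [applyStep, h]

lemma mem_pre {τ : Step N} {b : N.Auto} {t : N.Trans b} (h : τ b = some t)
    {p : N.LSt} (hp : p ∈ t.preSet) : p ∈ τ.pre := by
  simp only [Step.pre, Set.mem_iUnion]
  exact ⟨b, t, h, hp⟩

lemma playable_orig {s : GState N} {τ : Step N} (hpl : Playable s τ)
    {b : N.Auto} {t : N.Trans b} (h : τ b = some t) : s b = t.orig :=
  hpl ⟨b, t.orig⟩ (mem_pre h (Set.mem_insert _ _))

lemma playable_enab {s : GState N} {τ : Step N} (hpl : Playable s τ)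
    {b : N.Auto} {t : N.Trans b} (h : τ b = some t)
    {c : N.Auto} {k : N.LS c} (hk : t.enab c = some k) : s c = k :=
  hpl ⟨c, k⟩ (mem_pre h (Set.mem_insert_iff.2 (Or.inr hk)))

lemma sub_pre {σ τ : Step N} (h : σ.Sub τ) : σ.pre ⊆ τ.pre := by
  intro p hp
  simp only [Step.pre, Set.mem_iUnion] at hp ⊢
  obtain ⟨b, t, hb, hpp⟩ := hp
  exact ⟨b, t, h hb, hpp⟩

lemma applyTrace_take_succ {s : GState N} {π : List (Step N)} {n : ℕ}
    (h : n < π.length) :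
    applyTrace s (π.take (n + 1)) = applyStep (applyTrace s (π.take n)) π[n] := by
  have h1 : π.take (n + 1) = π.take n ++ [π[n]] := by
    rw [List.take_succ, List.getElem?_eq_getElem h]; rfl
  simp only [applyTrace]
  rw [h1, List.foldl_append]
  rfl

lemma isTrace_get {s : GState N} {π : List (Step N)} (h : IsTrace T s π)
    {m : ℕ} (hm : m < π.length) :
    (π[m]).Wf T ∧ Playable (applyTrace s (π.take m)) π[m] := by
  have := h m hm
  simpa [List.get_eq_getElem] using this

lemma isTrace_take {s : GState N} {π : List (Step N)} (h : IsTrace T s π)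
    (n : ℕ) : IsTrace T s (π.take n) := by
  intro i hi
  have hi' : i < n ∧ i < π.length := by
    simpa [List.length_take, lt_min_iff] using hi
  have hg : (π.take n).get ⟨i, hi⟩ = π[i] := by
    simp [List.get_eq_getElem, List.getElem_take]
  rw [hg, List.take_take, min_eq_left hi'.1.le]
  exact isTrace_get h hi'.2

lemma isTrace_cons {s : GState N} {τ : Step N} {π : List (Step N)} :
    IsTrace T s (τ :: π) ↔
      (τ.Wf T ∧ Playable s τ) ∧ IsTrace T (applyStep s τ) π := by
  constructor
  · intro h
    refine ⟨?_, ?_⟩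
    · have := h 0 (by simp)
      simpa [applyTrace] using this
    · intro i hi
      have := h (i + 1) (by simpa using Nat.succ_lt_succ hi)
      simpa [applyTrace, List.get_eq_getElem] using this
  · rintro ⟨⟨hw, hp⟩, h⟩ i hi
    cases i with
    | zero => simpa [applyTrace] using And.intro hw hp
    | succ i =>
      have := h i (by simpa using hi)
      simpa [applyTrace, List.get_eq_getElem] using this

/-- The sequence of local transitions of automaton `b` along a trace is a
chained walk from `s b` to the final local state of `b`. -/
lemma walk_chain {π : List (Step N)} : ∀ {s : GState N}, IsTrace T s π →
    ∀ b, Chain1 (s b) (applyTrace s π b) (π.filterMap (fun τ => τ b)) := by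
  induction π with
  | nil => intro s _ b; simp [applyTrace, Chain1]
  | cons τ π IH =>
    intro s h b
    obtain ⟨⟨hw, hp⟩, ht⟩ := isTrace_cons.1 h
    have happ : applyTrace s (τ :: π) = applyTrace (applyStep s τ) π := by
      simp [applyTrace]
    rw [happ]
    cases hτ : τ b with
    | none =>
      have h1 := IH ht b
      rw [applyStep_none hτ] at h1
      simpa [List.filterMap_cons, hτ] using h1
    | some t =>
      rw [List.filterMap_cons, hτ]
      refine ⟨(playable_orig hp hτ).symm, ?_⟩
      have h1 := IH ht b
      rwa [applyStep_some hτ] at h1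

/-- **Validity of reached local states** (Lemma 1): along a trace from `s`,
every reached local state `k` of an automaton `b` yields a valid objective
`s b ↝ k`. -/
lemma validity {s : GState N} {Ω : Set (Obj N)} (hΩ : Fop T s Ω = Ω)
    {π : List (Step N)} (hTr : IsTrace T s π) :
    ∀ n, n ≤ π.length → ∀ b,
      (⟨b, (s b, applyTrace s (π.take n) b)⟩ : Obj N) ∈ Ω := by
  intro n
  induction n using Nat.strong_induction_on with
  | _ n IH =>
    intro hn b
    have hprop : ∀ t ∈ (π.take n).filterMap (fun τ => τ b),
        t ∈ T b ∧ ∀ (c : N.Auto) (k : N.LS c), t.enab c = some k →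
          (⟨c, (s c, k)⟩ : Obj N) ∈ Ω := by
      intro t ht
      obtain ⟨τ, hτm, hτ⟩ := List.mem_filterMap.1 ht
      obtain ⟨m, hm, hτeq⟩ := List.mem_iff_getElem.1 hτm
      have hm' : m < n ∧ m < π.length := by
        simpa [List.length_take, lt_min_iff] using hm
      have hbt : π[m] b = some t := by
        rw [← List.getElem_take (xs := π) (j := n) (h := hm), hτeq]; exact hτ
      obtain ⟨hw, hp⟩ := isTrace_get hTr hm'.2
      refine ⟨hw hbt, fun c k hk => ?_⟩
      have h1 := IH m hm'.1 hm'.2.le c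
      rwa [playable_enab hp hbt hk] at h1
    obtain ⟨η, hch, hnd, hsub⟩ :=
      exists_loopfree _ (walk_chain (isTrace_take hTr n) b)
    rw [← hΩ]
    exact ⟨η, isLocalPath_of (fun t ht => (hprop t (hsub t ht)).1) hch hnd,
      fun t ht c k hk => (hprop t (hsub t ht)).2 c k hk⟩

end ANAux


open ANAux in
/-- **Lemma 2** (the last step of a minimal trace is in `tr(B)`): if `π` is a
minimal trace for `g_⊤` reachability from `s`, then every transition of its
last step belongs to `tr(B)`. -/
theorem last_step_of_minimal_trace_in_trB
    (N : AN) (T : TransMap N) (s : GState N)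
    (g : N.Auto) (gtop : N.LS g) (hg : s g ≠ gtop)
    (Ω : Set (Obj N)) (hΩ : IsLeast {W : Set (Obj N) | Fop T s W = W} Ω)
    (B : Set (Obj N)) (hB : IsLeast {B' : Set (Obj N) | BClosed T s Ω g gtop B'} B)
    (π : List (Step N)) (hπ : MinimalTrace T s ⟨g, gtop⟩ π) :
    ∃ hne : π ≠ [], ∀ (a : N.Auto) (t : N.Trans a),
      (π.getLast hne) a = some t →
        (⟨a, t⟩ : Σ a : N.Auto, N.Trans a) ∈ trB T s Ω B := by
  classical
  obtain ⟨hTr, hPost, hMin⟩ := hπ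
  have hne : π ≠ [] := by
    rintro rfl
    obtain ⟨n, hn, -⟩ := hPost
    simp at hn
  -- Step 1: the goal automaton is never at `gtop` strictly before the end.
  have hA : ∀ m, m < π.length → applyTrace s (π.take m) g ≠ gtop := by
    intro m
    induction m using Nat.strong_induction_on with
    | _ m IH =>
      intro hm hgt
      cases m with
      | zero => exact hg (by simpa [applyTrace] using hgt)
      | succ k =>
        have hk : k < π.length := by omega
        have hkg : applyTrace s (π.take k) g ≠ gtop := IH k (by omega) hk
        rw [applyTrace_take_succ hk] at hgt
        cases hτ : π[k] g with
        | none => rw [applyStep_none hτ] at hgt; exact hkg hgt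
        | some t =>
          rw [applyStep_some hτ] at hgt
          apply hMin
          have hlen : (π.take (k + 1)).length = k + 1 := by
            simp [List.length_take]; omega
          refine ⟨π.take (k + 1), isTrace_take hTr (k + 1), ?_, ?_, ?_, ?_⟩
          · intro he
            have := congrArg List.length he
            rw [hlen] at this
            omega
          · simp [List.length_take]
          · refine ⟨k, by omega, ?_, ?_⟩
            · have hget : (π.take (k + 1)).get ⟨k, by omega⟩ = π[k] := by
                simp [List.get_eq_getElem, List.getElem_take]
              rw [hget]
              constructor
              · simp only [Set.mem_iUnion]
                refine ⟨g, t, hτ, ?_⟩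
                rw [show (⟨g, gtop⟩ : N.LSt) = ⟨g, t.dest⟩ by rw [hgt]]
                exact Set.mem_insert _ _
              · rintro ⟨t', ht', horig⟩
                rw [hτ] at ht'
                cases ht'
                exact hkg ((playable_orig (isTrace_get hTr hk).2 hτ).trans horig.symm)
            · intro m' hm' hlt x
              rw [hlen] at hm'
              omega
          · refine ⟨fun i => ⟨i.1, lt_of_lt_of_le i.2
                (by rw [List.length_take]; exact min_le_right _ _)⟩,
              fun i j hij => hij, ?_⟩
            intro i
            simp only [List.get_eq_getElem, List.getElem_take]
            exact fun a t h => h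
  -- Step 2: the last step plays a transition of `g` with destination `gtop`.
  obtain ⟨n, hn, hpost, hlater⟩ := hPost
  simp only [List.get_eq_getElem] at hpost
  obtain ⟨hmem, -⟩ := hpost
  simp only [Set.mem_iUnion] at hmem
  obtain ⟨b, t, hbt, hps⟩ := hmem
  rcases Set.mem_insert_iff.1 hps with heq | henab
  swap
  · exfalso
    have hpre : (⟨g, gtop⟩ : N.LSt) ∈ (π[n]).pre :=
      mem_pre hbt (Set.mem_insert_iff.2 (Or.inr henab))
    exact hA n hn ((isTrace_get hTr hn).2 _ hpre)
  obtain ⟨hb, hd⟩ := Sigma.mk.inj_iff.1 heq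
  subst hb
  have hdd : t.dest = gtop := (eq_of_heq hd).symm
  have hnL : n + 1 = π.length := by
    by_contra hcon
    exact hA (n + 1) (by omega)
      (by rw [applyTrace_take_succ hn, applyStep_some hbt, hdd])
  have hstate : applyTrace s (π.take n) g = t.orig :=
    playable_orig (isTrace_get hTr hn).2 hbt
  -- Step 3: the last step contains no other transition.
  have hC : ∀ a, a ≠ g → π[n] a = none := by
    intro a hag
    cases hu : π[n] a with
    | none => rfl
    | some u =>
      exfalso
      apply hMin
      set τ' : Step N := fun c => if c = a then none else π[n] c with hτ'def
      have hτ'g : τ' g = some t := by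
        simp only [hτ'def]
        rw [if_neg (fun h => hag h.symm)]
        exact hbt
      have hτ'a : τ' a = none := by simp [hτ'def]
      have hsubτ : Step.Sub τ' (π[n]) := by
        intro c v h
        by_cases hc : c = a
        · subst hc; rw [hτ'a] at h; cases h
        · simpa only [hτ'def, if_neg hc] using h
      have hlen2 : (π.set n τ').length = π.length := by simp
      have htake : ∀ i, i ≤ n → (π.set n τ').take i = π.take i := by
        intro i hi
        apply List.ext_getElem (by simp)
        intro m h1 h2
        rw [List.getElem_take, List.getElem_take,
          List.getElem_set_ne (by have := lt_min_iff.1 (by simpa using h1); omega)]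
      have hsuball : ∀ (m : ℕ) (hm : m < π.length),
          Step.Sub ((π.set n τ')[m]'(by simpa using hm)) (π[m]) := by
        intro m hm
        rcases eq_or_ne n m with rfl | hne2
        · rw [List.getElem_set_self]; exact hsubτ
        · rw [List.getElem_set_ne hne2]; exact fun a v h => h
      refine ⟨π.set n τ', ?_, ?_, by simp, ?_, ?_⟩
      · intro i hi
        have hi' : i < π.length := by simpa using hi
        by_cases hiL : i = n
        · subst hiL
          have hget : (π.set i τ').get ⟨i, hi⟩ = τ' := by
            simp [List.get_eq_getElem]
          rw [hget, htake i le_rfl]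
          exact ⟨fun c v h => (isTrace_get hTr hi').1 (hsubτ h),
            fun p hp => (isTrace_get hTr hi').2 p (sub_pre hsubτ hp)⟩
        · have hget : (π.set n τ').get ⟨i, hi⟩ = π[i] := by
            simp [List.get_eq_getElem, List.getElem_set_ne (Ne.symm hiL)]
          rw [hget, htake i (by omega)]
          exact isTrace_get hTr hi'
      · intro he
        have h3 := congrArg (fun l => l[n]?) he
        rw [List.getElem?_set_self (by simpa using hn),
          List.getElem?_eq_getElem hn] at h3
        have h2 : τ' = π[n] := Option.some.inj h3
        rw [← h2, hτ'a] at hu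
        cases hu
      · refine ⟨n, by simpa using hn, ?_, ?_⟩
        · have hget : (π.set n τ').get ⟨n, by simpa using hn⟩ = τ' := by
            simp [List.get_eq_getElem]
          rw [hget]
          constructor
          · simp only [Set.mem_iUnion]
            refine ⟨g, t, hτ'g, ?_⟩
            rw [show (⟨g, gtop⟩ : N.LSt) = ⟨g, t.dest⟩ by rw [hdd]]
            exact Set.mem_insert _ _
          · rintro ⟨t', ht', horig⟩
            rw [hτ'g] at ht'
            cases ht'
            exact hA n hn (hstate.trans horig.symm)
        · intro m hm hlt x
          rw [hlen2] at hm
          omega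
      · refine ⟨fun i => ⟨i.1, by simpa using i.2⟩, fun i j hij => hij, ?_⟩
        intro i
        simp only [List.get_eq_getElem]
        exact hsuball i.1 (by simpa using i.2)
  -- Step 4: construct the acyclic local path witnessing `t ∈ tr(B)`.
  have hvalid := validity hΩ.1 hTr
  obtain ⟨η₀, hch, hnd, hsub⟩ :=
    exists_loopfree _ (walk_chain (isTrace_take hTr n) g)
  rw [hstate] at hch
  have hwprop : ∀ u ∈ (π.take n).filterMap (fun τ => τ g),
      u ∈ T g ∧ (∀ (c : N.Auto) (k : N.LS c), u.enab c = some k →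
        (⟨c, (s c, k)⟩ : Obj N) ∈ Ω) ∧ u.dest ≠ gtop := by
    intro u hu
    obtain ⟨τ, hτm, hτu⟩ := List.mem_filterMap.1 hu
    obtain ⟨m, hm, hτeq⟩ := List.mem_iff_getElem.1 hτm
    have hm' : m < n ∧ m < π.length := by
      simpa [List.length_take, lt_min_iff] using hm
    have hgu : π[m] g = some u := by
      rw [← List.getElem_take (xs := π) (j := n) (h := hm), hτeq]; exact hτu
    obtain ⟨hw, hp⟩ := isTrace_get hTr hm'.2
    refine ⟨hw hgu, fun c k hk => ?_, ?_⟩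
    · have h1 := hvalid m hm'.2.le c
      rwa [playable_enab hp hgu hk] at h1
    · intro hud
      exact hA (m + 1) (by omega)
        (by rw [applyTrace_take_succ hm'.2, applyStep_some hgu, hud])
  have hTη : ∀ u ∈ η₀ ++ [t], u ∈ T g := by
    intro u hu
    rcases List.mem_append.1 hu with hu | hu
    · exact (hwprop u (hsub u hu)).1
    · rw [List.mem_singleton.1 hu]
      exact (isTrace_get hTr hn).1 hbt
  have hchain : Chain1 (s g) gtop (η₀ ++ [t]) :=
    chain1_append hch ⟨rfl, hdd⟩
  have hgtop_not : gtop ∉ (s g) :: η₀.map Trans.dest := by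
    intro hmem
    rcases List.mem_cons.1 hmem with hmem | hmem
    · exact hg hmem.symm
    · obtain ⟨u, hu, hud⟩ := List.mem_map.1 hmem
      exact (hwprop u (hsub u hu)).2.2 hud
  have hnd2 : ((s g) :: (η₀ ++ [t]).map Trans.dest).Nodup := by
    rw [List.map_append]
    have heq2 : (s g) :: (η₀.map Trans.dest ++ [t].map Trans.dest)
        = ((s g) :: η₀.map Trans.dest) ++ [t.dest] := by simp
    rw [heq2, List.nodup_append']
    refine ⟨hnd, List.nodup_singleton _, ?_⟩
    intro x hx hx2
    rw [List.mem_singleton.1 hx2, hdd] at hx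
    exact hgtop_not hx
  have henv : ∀ u ∈ η₀ ++ [t], ∀ (c : N.Auto) (k : N.LS c), u.enab c = some k →
      (⟨c, (s c, k)⟩ : Obj N) ∈ Ω := by
    intro u hu c k hk
    rcases List.mem_append.1 hu with hu | hu
    · exact (hwprop u (hsub u hu)).2.1 c k hk
    · have hut := List.mem_singleton.1 hu
      subst hut
      have h1 := hvalid n (by omega) c
      rwa [playable_enab (isTrace_get hTr hn).2 hbt hk] at h1
  -- Conclusion
  refine ⟨hne, ?_⟩
  intro a t' hlast'
  have hidx : π.getLast hne = π[n] := by
    rw [List.getLast_eq_getElem]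
    congr 1
    omega
  rw [hidx] at hlast'
  by_cases hag : a = g
  swap
  · rw [hC a hag] at hlast'
    cases hlast'
  · subst hag
    rw [hbt] at hlast'
    obtain rfl := Option.some.inj hlast'
    exact ⟨s a, gtop, hB.1.1, η₀ ++ [t], ⟨isLocalPath_of hTη hchain hnd2, henv⟩,
      List.mem_append_right _ (List.mem_singleton_self _)⟩
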